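/- There exists a solvable finite group G with the same prime graph as PGL(2,9): G has order divisible exactly by the primes 2, 3, 5, has an element of order 10, and has no element of order 6 or 15. -/

import Mathlib

/-- `PGL(2,9)`: `GL(2, F₉)` modulo its center. -/
abbrev PGL29 : Type :=
  (Matrix.GeneralLinearGroup (Fin 2) (GaloisField 3 2)) ⧸
    Subgroup.center (Matrix.GeneralLinearGroup (Fin 2) (GaloisField 3 2))

attribute [local instance] Fintype.ofFinite


notation "K9" => GaloisField 3 2
notation "GLK" => Matrix.GeneralLinearGroup (Fin 2) K9
notation "F81" => GaloisField 3 4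

theorem K9_card : Fintype.card K9 = 9 := by
  have := GaloisField.card 3 2 (by norm_num)
  rwa [Nat.card_eq_fintype_card] at this

theorem three_eq_zero : (3 : K9) = 0 := by
  have := CharP.cast_eq_zero K9 3
  exact_mod_cast this

theorem K9two_ne_zero : (2 : K9) ≠ 0 := by
  have : ((2:ℕ) : K9) ≠ 0 := by
    rw [Ne, CharP.cast_eq_zero_iff K9 3 2]
    norm_num
  exact_mod_cast this

noncomputable def Uu : GLK :=
  ⟨!![1,1;0,1], !![1,-1;0,1],
    by rw [Matrix.mul_fin_two, Matrix.one_fin_two]; norm_num,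
    by rw [Matrix.mul_fin_two, Matrix.one_fin_two]; norm_num⟩

noncomputable def Lu : GLK :=
  ⟨!![1,0;1,1], !![1,0;-1,1],
    by rw [Matrix.mul_fin_two, Matrix.one_fin_two]; norm_num,
    by rw [Matrix.mul_fin_two, Matrix.one_fin_two]; norm_num⟩

noncomputable def Du : GLK :=
  ⟨!![1,0;0,-1], !![1,0;0,-1],
    by rw [Matrix.mul_fin_two, Matrix.one_fin_two]; norm_num,
    by rw [Matrix.mul_fin_two, Matrix.one_fin_two]; norm_num⟩

theorem central_scalar (z : Matrix (Fin 2) (Fin 2) K9)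
    (hU : z * !![1,1;0,1] = !![1,1;0,1] * z)
    (hL : z * !![1,0;1,1] = !![1,0;1,1] * z) :
    z = z 0 0 • (1 : Matrix (Fin 2) (Fin 2) K9) := by
  rw [Matrix.eta_fin_two z, Matrix.mul_fin_two, Matrix.mul_fin_two] at hU hL
  have h1 := congrFun (congrFun hU 0) 0
  have h2 := congrFun (congrFun hU 0) 1
  have h4 := congrFun (congrFun hL 0) 0
  simp at h1 h2 h4
  have hd : z 1 1 = z 0 0 := by linear_combination -h2
  ext i j
  fin_cases i <;> fin_cases j <;> simp [Matrix.one_apply, h1, h4, hd]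

theorem center_pow_eight {z : GLK} (hz : z ∈ Subgroup.center GLK) : z ^ 8 = 1 := by
  have hU := congrArg Units.val (Subgroup.mem_center_iff.mp hz Uu)
  have hL := congrArg Units.val (Subgroup.mem_center_iff.mp hz Lu)
  rw [Units.val_mul, Units.val_mul] at hU hL
  have hs := central_scalar z.val hU.symm hL.symm
  set a : K9 := z.val 0 0 with ha
  have hmul : z.val * (↑z⁻¹ : Matrix (Fin 2) (Fin 2) K9) = 1 := z.mul_inv
  rw [hs, smul_mul_assoc, one_mul] at hmul
  have h00 := congrFun (congrFun hmul 0) 0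
  have hane : a ≠ 0 := by
    simp [Matrix.smul_apply] at h00
    exact left_ne_zero_of_mul_eq_one h00
  have ha8 : a ^ 8 = 1 := by
    have := FiniteField.pow_card_sub_one_eq_one a hane
    rwa [K9_card] at this
  ext
  rw [Units.val_pow_eq_pow_val, hs, smul_pow, ha8, one_pow, one_smul, Units.val_one]

theorem Uu_not_center : Uu ∉ Subgroup.center GLK := by
  intro h
  have := congrArg Units.val (Subgroup.mem_center_iff.mp h Lu)
  rw [Units.val_mul, Units.val_mul] at this
  have h00 := congrFun (congrFun this 0) 0
  simp [Uu, Lu, Matrix.mul_fin_two] at h00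
  

theorem Du_not_center : Du ∉ Subgroup.center GLK := by
  intro h
  have := congrArg Units.val (Subgroup.mem_center_iff.mp h Uu)
  rw [Units.val_mul, Units.val_mul] at this
  have h01 := congrFun (congrFun this 0) 1
  simp [Uu, Du, Matrix.mul_fin_two] at h01
  exact K9two_ne_zero (by linear_combination -h01)


theorem Uu_pow_three : Uu ^ 3 = 1 := by
  apply Units.ext
  rw [Units.val_pow_eq_pow_val, Units.val_one]
  show (!![1,1;0,1] : Matrix (Fin 2) (Fin 2) K9) ^ 3 = 1
  rw [pow_succ, pow_succ, pow_one, Matrix.mul_fin_two, Matrix.mul_fin_two,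
    Matrix.one_fin_two]
  norm_num
  simp [three_eq_zero]

theorem Du_pow_two : Du ^ 2 = 1 := by
  apply Units.ext
  rw [Units.val_pow_eq_pow_val, Units.val_one]
  show (!![1,0;0,-1] : Matrix (Fin 2) (Fin 2) K9) ^ 2 = 1
  rw [pow_two, Matrix.mul_fin_two, Matrix.one_fin_two]
  norm_num

theorem card_GLK : Nat.card GLK = 5760 := by
  rw [Matrix.card_GL_field, K9_card]
  decide

theorem dvd5760 {p : ℕ} (hp : p.Prime) (h : p ∣ 5760) : p = 2 ∨ p = 3 ∨ p = 5 := by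
  rw [show (5760 : ℕ) = 2 ^ 7 * 3 ^ 2 * 5 by norm_num] at h
  rcases (Nat.Prime.dvd_mul hp).mp h with h | h
  · rcases (Nat.Prime.dvd_mul hp).mp h with h | h
    · exact Or.inl ((Nat.prime_dvd_prime_iff_eq hp Nat.prime_two).mp (hp.dvd_of_dvd_pow h))
    · exact Or.inr (Or.inl ((Nat.prime_dvd_prime_iff_eq hp Nat.prime_three).mp
        (hp.dvd_of_dvd_pow h)))
  · exact Or.inr (Or.inr ((Nat.prime_dvd_prime_iff_eq hp (by norm_num)).mp h))

theorem dvd810 {p : ℕ} (hp : p.Prime) (h : p ∣ 810) : p = 2 ∨ p = 3 ∨ p = 5 := by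
  rw [show (810 : ℕ) = 2 ^ 1 * 3 ^ 4 * 5 by norm_num] at h
  rcases (Nat.Prime.dvd_mul hp).mp h with h | h
  · rcases (Nat.Prime.dvd_mul hp).mp h with h | h
    · exact Or.inl ((Nat.prime_dvd_prime_iff_eq hp Nat.prime_two).mp (hp.dvd_of_dvd_pow h))
    · exact Or.inr (Or.inl ((Nat.prime_dvd_prime_iff_eq hp Nat.prime_three).mp
        (hp.dvd_of_dvd_pow h)))
  · exact Or.inr (Or.inr ((Nat.prime_dvd_prime_iff_eq hp (by norm_num)).mp h))

theorem primes_PGL29 : {p : ℕ | p.Prime ∧ p ∣ Nat.card PGL29} = ({2, 3, 5} : Set ℕ) := by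
  ext p
  simp only [Set.mem_setOf_eq, Set.mem_insert_iff, Set.mem_singleton_iff]
  constructor
  · rintro ⟨hp, hdvd⟩
    have hq : Nat.card PGL29 ∣ Nat.card GLK :=
      Subgroup.card_quotient_dvd_card (Subgroup.center GLK)
    exact dvd5760 hp (hdvd.trans (card_GLK ▸ hq))
  · intro h
    have heq : Nat.card GLK = Nat.card PGL29 * Nat.card (Subgroup.center GLK) :=
      Subgroup.card_eq_card_quotient_mul_card_subgroup (Subgroup.center GLK)
    have h2 : (2 : ℕ) ∣ Nat.card PGL29 := by
      have hpow : ((Du : PGL29)) ^ 2 = 1 := by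
        rw [← QuotientGroup.mk_pow, Du_pow_two]; rfl
      have hne : ((Du : PGL29)) ≠ 1 := by
        intro hcon
        exact Du_not_center ((QuotientGroup.eq_one_iff Du).mp hcon)
      have : Fact (Nat.Prime 2) := ⟨Nat.prime_two⟩
      have ho := orderOf_eq_prime hpow hne
      exact ho ▸ orderOf_dvd_natCard (Du : PGL29)
    have h3 : (3 : ℕ) ∣ Nat.card PGL29 := by
      have hpow : ((Uu : PGL29)) ^ 3 = 1 := by
        rw [← QuotientGroup.mk_pow, Uu_pow_three]; rfl
      have hne : ((Uu : PGL29)) ≠ 1 := by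
        intro hcon
        exact Uu_not_center ((QuotientGroup.eq_one_iff Uu).mp hcon)
      have : Fact (Nat.Prime 3) := ⟨Nat.prime_three⟩
      have ho := orderOf_eq_prime hpow hne
      exact ho ▸ orderOf_dvd_natCard (Uu : PGL29)
    have h5 : (5 : ℕ) ∣ Nat.card PGL29 := by
      have h5760 : (5 : ℕ) ∣ Nat.card PGL29 * Nat.card (Subgroup.center GLK) := by
        rw [← heq, card_GLK]; norm_num
      rcases (Nat.Prime.dvd_mul (by norm_num)).mp h5760 with h | h
      · exact h
      · exfalso
        have : Fact (Nat.Prime 5) := ⟨by norm_num⟩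
        obtain ⟨z, hz⟩ := exists_prime_orderOf_dvd_card (G := ↥(Subgroup.center GLK)) 5
          (by rwa [← Nat.card_eq_fintype_card])
        have hz8 := center_pow_eight z.2
        have hcoe : orderOf (z : GLK) = 5 := by rw [Subgroup.orderOf_coe, hz]
        have hdv : (5 : ℕ) ∣ 8 := hcoe ▸ orderOf_dvd_of_pow_eq_one hz8
        norm_num at hdv
    rcases h with rfl | rfl | rfl
    exacts [⟨Nat.prime_two, h2⟩, ⟨Nat.prime_three, h3⟩, ⟨by norm_num, h5⟩]


noncomputable def act : F81ˣ →* MulAut (Multiplicative F81) where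
  toFun u :=
    { toFun := fun x => Multiplicative.ofAdd ((u : F81) * x.toAdd)
      invFun := fun x => Multiplicative.ofAdd (((u⁻¹ : F81ˣ) : F81) * x.toAdd)
      left_inv := fun x => by simp [← mul_assoc]
      right_inv := fun x => by simp [← mul_assoc]
      map_mul' := fun x y => by simp [toAdd_mul, mul_add, ofAdd_add] }
  map_one' := by ext x; simp
  map_mul' u v := by ext x; simp [mul_assoc]

variable (ζ : F81ˣ)

noncomputable def phiz : ↥(Subgroup.zpowers ζ) →* MulAut (Multiplicative F81) :=
  act.comp (Subgroup.zpowers ζ).subtype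

theorem phiz_apply (b : ↥(Subgroup.zpowers ζ)) (x : Multiplicative F81) :
    phiz ζ b x = Multiplicative.ofAdd (((b : F81ˣ) : F81) * x.toAdd) := rfl

noncomputable abbrev SDPg : Type :=
  SemidirectProduct (Multiplicative F81) ↥(Subgroup.zpowers ζ) (phiz ζ)

noncomputable def sdpEquiv : SDPg ζ ≃ Multiplicative F81 × ↥(Subgroup.zpowers ζ) where
  toFun x := (x.left, x.right)
  invFun p := ⟨p.1, p.2⟩
  left_inv x := rfl
  right_inv p := rfl

instance : Finite (SDPg ζ) := Finite.of_equiv _ (sdpEquiv ζ).symm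

theorem sdp_card : Nat.card (SDPg ζ) = 81 * orderOf ζ := by
  rw [Nat.card_congr (sdpEquiv ζ), Nat.card_prod, Nat.card_zpowers,
    Nat.card_congr Multiplicative.toAdd, GaloisField.card 3 4 (by norm_num)]
  norm_num

theorem sdp_solvable : IsSolvable (SDPg ζ) := by
  have h1 : IsSolvable (Multiplicative F81) := isSolvable_of_comm fun a b => mul_comm a b
  have h2 : IsSolvable ↥(Subgroup.zpowers ζ) := isSolvable_of_comm fun a b => mul_comm a b
  exact solvable_of_ker_le_range SemidirectProduct.inl SemidirectProduct.rightHom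
    (le_of_eq SemidirectProduct.range_inl_eq_ker_rightHom.symm)

theorem sdp_order10 (hζ : orderOf ζ = 10) : ∃ g : SDPg ζ, orderOf g = 10 := by
  refine ⟨SemidirectProduct.inr ⟨ζ, Subgroup.mem_zpowers ζ⟩, ?_⟩
  rw [orderOf_injective SemidirectProduct.inr SemidirectProduct.inr_injective,
    Subgroup.orderOf_mk, hζ]

theorem left_order_dvd_three (g : SDPg ζ) (hb : g.right = 1) : g ^ 3 = 1 := by
  have hgl : g = SemidirectProduct.inl g.left := by
    ext
    · simp
    · simp [hb]
  rw [hgl, ← map_pow]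
  have h3 : g.left ^ 3 = 1 := by
    apply Multiplicative.toAdd.injective
    rw [toAdd_pow]
    show (3 : ℕ) • (Multiplicative.toAdd g.left) = Multiplicative.toAdd 1
    rw [← Nat.cast_smul_eq_nsmul F81, (CharP.cast_eq_zero_iff F81 3 3).mpr dvd_rfl,
      zero_smul]
    rfl
  rw [h3, map_one]

theorem right_pow_eq_one (g : SDPg ζ) (n : ℕ) (h : g ^ n = 1) : g.right ^ n = 1 := by
  have := congrArg SemidirectProduct.rightHom h
  rwa [map_pow, map_one] at this

theorem orderOf_right_dvd_ten (hζ : orderOf ζ = 10) (g : SDPg ζ) :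
    orderOf g.right ∣ 10 := by
  have := orderOf_dvd_natCard g.right
  rwa [Nat.card_zpowers, hζ] at this

theorem val_sq_cases {b : ↥(Subgroup.zpowers ζ)} (h : b ^ 2 = 1) :
    ((b : F81ˣ) : F81) = 1 ∨ ((b : F81ˣ) : F81) = -1 := by
  have h' : ((b : F81ˣ) : F81) * ((b : F81ˣ) : F81) = 1 := by
    have := congrArg (fun t : ↥(Subgroup.zpowers ζ) => ((t : F81ˣ) : F81)) h
    push_cast at this
    rw [pow_two] at this
    exact_mod_cast this
  exact mul_self_eq_one_iff.mp h'

theorem sdp_no6 (hζ : orderOf ζ = 10) : ¬ ∃ g : SDPg ζ, orderOf g = 6 := by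
  rintro ⟨g, hg⟩
  have hg6 : g ^ 6 = 1 := by rw [← hg]; exact pow_orderOf_eq_one g
  have hb2 : g.right ^ 2 = 1 := by
    rw [← orderOf_dvd_iff_pow_eq_one]
    have h6 : orderOf g.right ∣ 6 :=
      orderOf_dvd_of_pow_eq_one (right_pow_eq_one ζ g 6 hg6)
    have h10 := orderOf_right_dvd_ten ζ hζ g
    simpa using Nat.dvd_gcd h6 h10
  rcases val_sq_cases ζ hb2 with h1 | hm1
  · -- right component trivial
    have hb1 : g.right = 1 := Subtype.ext (Units.ext h1)
    have h3 := left_order_dvd_three ζ g hb1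
    have : (6 : ℕ) ∣ 3 := hg ▸ orderOf_dvd_of_pow_eq_one h3
    norm_num at this
  · have h2 : g ^ 2 = 1 := by
      rw [pow_two]
      ext
      · rw [SemidirectProduct.mul_left, phiz_apply, hm1]
        apply Multiplicative.toAdd.injective
        rw [toAdd_mul, toAdd_ofAdd]
        show Multiplicative.toAdd g.left + _ = (0 : F81)
        ring
      · rw [SemidirectProduct.mul_right, ← pow_two]
        rw [hb2]
        simp
    have : (6 : ℕ) ∣ 2 := hg ▸ orderOf_dvd_of_pow_eq_one h2
    norm_num at this

theorem sdp_no15 (hζ : orderOf ζ = 10) : ¬ ∃ g : SDPg ζ, orderOf g = 15 := by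
  rintro ⟨g, hg⟩
  have hg15 : g ^ 15 = 1 := by rw [← hg]; exact pow_orderOf_eq_one g
  have hb5 : g.right ^ 5 = 1 := by
    rw [← orderOf_dvd_iff_pow_eq_one]
    have h15 : orderOf g.right ∣ 15 :=
      orderOf_dvd_of_pow_eq_one (right_pow_eq_one ζ g 15 hg15)
    have h10 := orderOf_right_dvd_ten ζ hζ g
    simpa using Nat.dvd_gcd h15 h10
  set u : F81 := ((g.right : F81ˣ) : F81) with hu
  have hu5 : u ^ 5 = 1 := by
    have := congrArg (fun t : ↥(Subgroup.zpowers ζ) => ((t : F81ˣ) : F81)) hb5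
    push_cast at this
    exact_mod_cast this
  by_cases h1 : u = 1
  · have hb1 : g.right = 1 := Subtype.ext (Units.ext h1)
    have h3 := left_order_dvd_three ζ g hb1
    have : (15 : ℕ) ∣ 3 := hg ▸ orderOf_dvd_of_pow_eq_one h3
    norm_num at this
  · have hS : 1 + u + u ^ 2 + u ^ 3 + u ^ 4 = 0 := by
      have hne : u - 1 ≠ 0 := sub_ne_zero.mpr h1
      apply mul_left_cancel₀ hne
      rw [mul_zero]
      linear_combination hu5
    have h5 : g ^ 5 = 1 := by
      have e5 : g ^ 5 = g * g * g * g * g := by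
        rw [pow_succ, pow_succ, pow_succ, pow_succ, pow_one]
      rw [e5]
      ext
      · simp only [SemidirectProduct.mul_left, SemidirectProduct.mul_right, phiz_apply]
        apply Multiplicative.toAdd.injective
        push_cast
        simp only [toAdd_mul, toAdd_ofAdd]
        simp only [SemidirectProduct.one_left, toAdd_one]
        have key : (Multiplicative.toAdd g.left + u * Multiplicative.toAdd g.left +
            u * u * Multiplicative.toAdd g.left + u * u * u * Multiplicative.toAdd g.left +
            u * u * u * u * Multiplicative.toAdd g.left : F81) = 0 := by
          linear_combination (Multiplicative.toAdd g.left) * hS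
        rw [hu] at key
        convert congrArg Multiplicative.toAdd key using 0
      · simp only [SemidirectProduct.mul_right, SemidirectProduct.one_right]
        rw [show g.right * g.right * g.right * g.right * g.right = g.right ^ 5 by
          rw [pow_succ, pow_succ, pow_succ, pow_succ, pow_one], hb5]
    have : (15 : ℕ) ∣ 5 := hg ▸ orderOf_dvd_of_pow_eq_one h5
    norm_num at this
theorem zeta_exists : ∃ ζ : F81ˣ, orderOf ζ = 10 := by
  have hcard : Nat.card F81ˣ = 80 := by
    rw [Nat.card_units, GaloisField.card 3 4 (by norm_num)]
    norm_num
  obtain ⟨g, hg⟩ := IsCyclic.exists_generator (α := F81ˣ)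
  have htop : Subgroup.zpowers g = ⊤ := (Subgroup.eq_top_iff' _).mpr hg
  have hog : orderOf g = 80 := by
    rw [← Nat.card_zpowers, htop, Subgroup.card_top, hcard]
  refine ⟨g ^ 8, ?_⟩
  rw [orderOf_pow, hog]
  decide

/-- There exists a solvable finite group with the same prime graph as
`PGL(2,9)`: its set of prime divisors is `{2, 3, 5}`, it has an element of
order `10`, and it has no element of order `6` or of order `15`. -/
theorem exists_solvable_group_same_primeGraph_as_PGL29 :
    ∃ (G : Type) (_ : Group G), Finite G ∧ IsSolvable G ∧
      {p : ℕ | p.Prime ∧ p ∣ Nat.card G} =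
        {p : ℕ | p.Prime ∧ p ∣ Nat.card PGL29} ∧
      {p : ℕ | p.Prime ∧ p ∣ Nat.card G} = ({2, 3, 5} : Set ℕ) ∧
      (∃ g : G, orderOf g = 10) ∧
      ¬(∃ g : G, orderOf g = 6) ∧ ¬(∃ g : G, orderOf g = 15) := by
  obtain ⟨ζ, hζ⟩ := zeta_exists
  have hc : Nat.card (SDPg ζ) = 810 := by rw [sdp_card, hζ]
  have hG : {p : ℕ | p.Prime ∧ p ∣ Nat.card (SDPg ζ)} = ({2, 3, 5} : Set ℕ) := by
    ext p
    simp only [Set.mem_setOf_eq, Set.mem_insert_iff, Set.mem_singleton_iff]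
    constructor
    · rintro ⟨hp, h⟩
      rw [hc] at h
      exact dvd810 hp h
    · rintro (rfl | rfl | rfl) <;>
        exact ⟨by norm_num, by rw [hc]; norm_num⟩
  exact ⟨SDPg ζ, inferInstance, inferInstance, sdp_solvable ζ,
    hG.trans primes_PGL29.symm, hG, sdp_order10 ζ hζ, sdp_no6 ζ hζ, sdp_no15 ζ hζ⟩
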